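/- Suppose κ is ineffable, d⃗ is a κ-list, C is a club in κ, and j : M → H(θ) is a small embedding for κ with d⃗ ∈ ran(j) and d_{crit(j)} ∈ M (witnessing ineffability). If additionally C ∈ ran(j), then there exists α ∈ C ∩ crit(j) with d_α = d_{crit(j)} ∩ α; that is, j also witnesses the subtlety of κ with respect to d⃗ and C. -/

import Mathlib

open FirstOrder
open scoped Classical
noncomputable section

/-- The first-order language of set theory: one binary relation (membership). -/
def Lmem : FirstOrder.Language :=
  ⟨fun _ => Empty, fun n => match n with | 2 => Unit | _ => Empty⟩

/-- Any set of `ZFSet`s is an `Lmem`-structure via true membership. -/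
instance structSet (S : Set ZFSet) : Lmem.Structure S where
  funMap {n} f _ := f.elim
  RelMap {n} r v :=
    match n, r, v with
    | 2, _, v => ((v 0 : ZFSet) ∈ (v 1 : ZFSet))
    | 0, r, _ => r.elim
    | 1, r, _ => r.elim
    | (_+3), r, _ => r.elim

/-- The universe of sets as an `Lmem`-structure. -/
instance structV : Lmem.Structure ZFSet where
  funMap {n} f _ := f.elim
  RelMap {n} r v :=
    match n, r, v with
    | 2, _, v => ((v 0 : ZFSet) ∈ (v 1 : ZFSet))
    | 0, r, _ => r.elim
    | 1, r, _ => r.elim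
    | (_+3), r, _ => r.elim

/-- The (external) cardinality of a ZF-set. -/
noncomputable def zCard (x : ZFSet) : Cardinal := Cardinal.mk x.toSet

/-- A ZF-set is a cardinal: an ordinal all of whose members have strictly
smaller cardinality. -/
def zIsCard (x : ZFSet) : Prop := x.IsOrdinal ∧ ∀ y ∈ x, zCard y < zCard x

/-- A regular cardinal. -/
def zIsRegular (x : ZFSet) : Prop := zIsCard x ∧ (zCard x).IsRegular

/-- An uncountable regular cardinal. -/
def zIsRegularUncountable (x : ZFSet) : Prop := zIsRegular x ∧ Cardinal.aleph0 < zCard x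

/-- A strong limit cardinal. -/
def zIsStrongLimit (x : ZFSet) : Prop := zIsCard x ∧ ∀ y ∈ x, zIsCard y → 2 ^ zCard y < zCard x

/-- An inaccessible cardinal. -/
def zIsInaccessible (x : ZFSet) : Prop :=
  zIsRegularUncountable x ∧ zIsStrongLimit x

/-- `x` is hereditarily of cardinality less than `θ`, i.e. `x ∈ H(θ)`. -/
def InH (θ x : ZFSet) : Prop := ZFSet.Hereditarily (fun y => zCard y < zCard θ) x

/-- The class `H(θ)` of sets hereditarily of cardinality `< θ`. -/
def HSet (θ : ZFSet) : Set ZFSet := {x | InH θ x}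

/-- A (pre-)small embedding into `H(θ)`: a nontrivial elementary embedding
`j : M → H(θ)` with `M ∈ H(θ)` transitive, moving some ordinal of `M`. -/
structure SmallEmb (θ : ZFSet) where
  M : ZFSet
  trans : M.IsTransitive
  memH : InH θ M
  j : M.toSet ↪ₑ[Lmem] (HSet θ)
  nt : ∃ α, ∃ h : α ∈ M, α.IsOrdinal ∧ α ∈ ((j ⟨α, h⟩ : HSet θ) : ZFSet)

namespace SmallEmb

variable {θ : ZFSet}

/-- Application of the embedding, as a map `ZFSet → ZFSet` (junk value `∅` off `M`). -/
noncomputable def app (e : SmallEmb θ) (x : ZFSet) : ZFSet :=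
  if h : x ∈ e.M then ((e.j ⟨x, h⟩ : HSet θ) : ZFSet) else ∅

/-- The set of ordinals of `M` moved (upwards) by the embedding. -/
def movedSet (e : SmallEmb θ) : Set ZFSet := {α | α.IsOrdinal ∧ α ∈ e.M ∧ α ∈ e.app α}

theorem movedSet_nonempty (e : SmallEmb θ) : e.movedSet.Nonempty := by
  obtain ⟨α, h, h1, h2⟩ := e.nt
  exact ⟨α, h1, h, by simpa [SmallEmb.app, h] using h2⟩

/-- The critical point: the least ordinal moved by the embedding. -/
noncomputable def crit (e : SmallEmb θ) : ZFSet :=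
  ZFSet.mem_wf.min e.movedSet e.movedSet_nonempty

/-- The range of the embedding, as a class of `ZFSet`s. -/
def ran (e : SmallEmb θ) : Set ZFSet := {y | ∃ x, x ∈ e.M ∧ e.app x = y}

/-- The pointwise image `j[δ]` of a set `δ ⊆ M` under the embedding. -/
noncomputable def img (e : SmallEmb θ) (δ : ZFSet) : ZFSet :=
  @ZFSet.image e.app (Classical.allZFSetDefinable _) δ

end SmallEmb

/-- `e` is a small embedding *for* `κ`: it sends its critical point to `κ`. -/
def IsSmallEmbFor {θ : ZFSet} (e : SmallEmb θ) (κ : ZFSet) : Prop :=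
  e.app e.crit = κ

/-- Application of a ZF-coded function (set of ordered pairs) to an argument. -/
noncomputable def fapp (f α : ZFSet) : ZFSet :=
  if h : ∃ x, α.pair x ∈ f then h.choose else ∅

/-- A `κ`-list: a ZF-coded function on `κ` with `d_α ⊆ α` for all `α < κ`. -/
def IsList (κ d : ZFSet) : Prop :=
  ZFSet.IsFunc κ (ZFSet.powerset κ) d ∧ ∀ α ∈ κ, fapp d α ⊆ α

/-- `C` is closed unbounded in `κ` (as a class of `ZFSet`s). -/
def zIsClub (C : Set ZFSet) (κ : ZFSet) : Prop :=
  (∀ x ∈ C, x ∈ κ) ∧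
  (∀ α ∈ κ, ∃ β ∈ C, α ∈ β ∨ α = β) ∧
  (∀ α ∈ κ, (∃ β, β ∈ α) →
    (∀ β ∈ α, ∃ γ, γ ∈ C ∧ γ ∈ α ∧ (β ∈ γ ∨ β = γ)) → α ∈ C)

/-- `S` is stationary in `κ`: it meets every club subset (coded in `V`) of `κ`. -/
def zIsStationary (S : Set ZFSet) (κ : ZFSet) : Prop :=
  ∀ C : ZFSet, zIsClub C.toSet κ → ∃ x, x ∈ S ∧ x ∈ C

/-- A ZF-coded club. -/
def zClub (C κ : ZFSet) : Prop := zIsClub C.toSet κ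

/-- κ is ineffable: regular uncountable, and for every κ-list there is D ⊆ κ such that
`{α < κ | d_α = D ∩ α}` is stationary in κ. -/
def zIneffable (κ : ZFSet) : Prop :=
  zIsRegularUncountable κ ∧
  ∀ d : ZFSet, IsList κ d → ∃ D : ZFSet, D ⊆ κ ∧
    zIsStationary {α : ZFSet | α ∈ κ ∧ fapp d α = D ∩ α} κ

/-! ### Auxiliary machinery -/

open FirstOrder Language ZFSet

section Formulas

/-- Membership atomic formula. -/
abbrev mF {m n : ℕ} (t u : Lmem.Term (Fin m ⊕ Fin n)) : Lmem.BoundedFormula (Fin m) n :=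
  Relations.boundedFormula₂ (Unit.unit : Lmem.Relations 2) t u

/-- Free-variable term. -/
abbrev fv {m n : ℕ} (i : Fin m) : Lmem.Term (Fin m ⊕ Fin n) := Term.var (Sum.inl i)

@[simp] lemma relMap_mem {S : Set ZFSet} (r : Lmem.Relations 2) (a b : S) :
    Structure.RelMap r ![a, b] ↔ (a : ZFSet) ∈ (b : ZFSet) := Iff.rfl

@[simp] lemma realize_mF {S : Set ZFSet} {m n : ℕ} (t u : Lmem.Term (Fin m ⊕ Fin n))
    (v : Fin m → S) (xs : Fin n → S) :
    (mF t u).Realize v xs ↔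
      ((t.realize (Sum.elim v xs) : S) : ZFSet) ∈ ((u.realize (Sum.elim v xs) : S) : ZFSet) :=
  Iff.rfl

def φmem : Lmem.Formula (Fin 2) := mF (fv 0) (fv 1)
def φsub : Lmem.Formula (Fin 2) := ∀' ((mF &0 (fv 0)) ⟹ (mF &0 (fv 1)))
def φemp : Lmem.Formula (Fin 1) := ∀' (∼(mF &0 (fv 0)))
def φord : Lmem.Formula (Fin 1) :=
  ∀' ∀' ∀' (((mF &0 (fv 0)) ⟹ (mF &1 &0) ⟹ (mF &1 (fv 0))) ⊓
    ((mF &0 (fv 0)) ⟹ (mF &1 &0) ⟹ (mF &2 &1) ⟹ (mF &2 &0)))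
def φu : Lmem.Formula (Fin 2) :=
  ∃' ((mF &0 (fv 1)) ⊓ ((mF (fv 0) &0) ⊔ ((fv 0) =' &0)))
def φ3 : Lmem.Formula (Fin 3) :=
  ∃' ∃' ∃' ((mF &0 (fv 0)) ⊓ (mF &2 (fv 1)) ⊓
    (∀' ((mF &3 &2) ⇔
      ((∀' ((mF &4 &3) ⇔ (&4 =' &0))) ⊔ (∀' ((mF &4 &3) ⇔ ((&4 =' &0) ⊔ (&4 =' &1))))))) ⊓
    (∀' ((mF &3 &1) ⇔ ((mF &3 (fv 2)) ⊓ (mF &3 &0)))))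
def φ6 : Lmem.Formula (Fin 6) :=
  (mF (fv 3) (fv 0)) ⊓ (mF (fv 5) (fv 1)) ⊓
    (∀' ((mF &0 (fv 5)) ⇔
      ((∀' ((mF &1 &0) ⇔ (&1 =' fv 3))) ⊔ (∀' ((mF &1 &0) ⇔ ((&1 =' fv 3) ⊔ (&1 =' fv 4))))))) ⊓
    (∀' ((mF &0 (fv 4)) ⇔ ((mF &0 (fv 2)) ⊓ (mF &0 (fv 3)))))

def Psing (S : Set ZFSet) (w a : ZFSet) : Prop := ∀ u ∈ S, u ∈ w ↔ u = a
def Pdoub (S : Set ZFSet) (w a b : ZFSet) : Prop := ∀ u ∈ S, u ∈ w ↔ u = a ∨ u = b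
def Pbody (S : Set ZFSet) (Cp dp Dp a x p : ZFSet) : Prop :=
  ((a ∈ Cp ∧ p ∈ dp) ∧
    ∀ w ∈ S, w ∈ p ↔ Psing S w a ∨ Pdoub S w a x) ∧
  ∀ w ∈ S, w ∈ x ↔ w ∈ Dp ∧ w ∈ a

lemma realize_φmem {S : Set ZFSet} (v : Fin 2 → S) :
    Formula.Realize (M := S) φmem v ↔ (v 0 : ZFSet) ∈ (v 1 : ZFSet) := by
  simp [φmem, Formula.Realize]

lemma realize_φsub {S : Set ZFSet} (v : Fin 2 → S) :
    Formula.Realize (M := S) φsub v ↔ ∀ a ∈ S, a ∈ (v 0 : ZFSet) → a ∈ (v 1 : ZFSet) := by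
  simp [φsub, Formula.Realize, Fin.snoc]

lemma realize_φemp {S : Set ZFSet} (v : Fin 1 → S) :
    Formula.Realize (M := S) φemp v ↔ ∀ a ∈ S, a ∉ (v 0 : ZFSet) := by
  simp [φemp, Formula.Realize, Fin.snoc]

lemma realize_φord {S : Set ZFSet} (v : Fin 1 → S) :
    Formula.Realize (M := S) φord v ↔
      ∀ a ∈ S, ∀ b ∈ S, ∀ c ∈ S,
        (a ∈ (v 0 : ZFSet) → b ∈ a → b ∈ (v 0 : ZFSet)) ∧
        (a ∈ (v 0 : ZFSet) → b ∈ a → c ∈ b → c ∈ a) := by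
  simp (config := { decide := true }) [φord, Formula.Realize, Fin.snoc]

lemma realize_φu {S : Set ZFSet} (v : Fin 2 → S) :
    Formula.Realize (M := S) φu v ↔
      ∃ a ∈ S, a ∈ (v 1 : ZFSet) ∧ ((v 0 : ZFSet) ∈ a ∨ (v 0 : ZFSet) = a) := by
  simp [φu, Formula.Realize, Fin.snoc, Subtype.ext_iff]
  constructor
  · rintro ⟨a, h1, h2, h3⟩; exact ⟨a, h2, h1, h3⟩
  · rintro ⟨a, h1, h2, h3⟩; exact ⟨a, h2, h1, h3⟩

lemma realize_φ3 {S : Set ZFSet} (v : Fin 3 → S) :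
    Formula.Realize (M := S) φ3 v ↔
      ∃ a ∈ S, ∃ x ∈ S, ∃ p ∈ S,
        Pbody S (v 0 : ZFSet) (v 1 : ZFSet) (v 2 : ZFSet) a x p := by
  simp (config := { decide := true })
    [φ3, Pbody, Psing, Pdoub, Formula.Realize, Fin.snoc, Subtype.ext_iff]
  constructor
  · rintro ⟨a, ha, x, ⟨p, ⟨h1, h2⟩, hp, h3⟩, hx, h4⟩
    exact ⟨a, ha, x, hx, p, hp, ⟨⟨h1, h2⟩, h3⟩, h4⟩
  · rintro ⟨a, ha, x, hx, p, hp, ⟨⟨h1, h2⟩, h3⟩, h4⟩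
    exact ⟨a, ha, x, ⟨p, ⟨h1, h2⟩, hp, h3⟩, hx, h4⟩

lemma realize_φ6 {S : Set ZFSet} (v : Fin 6 → S) :
    Formula.Realize (M := S) φ6 v ↔
      Pbody S (v 0 : ZFSet) (v 1 : ZFSet) (v 2 : ZFSet)
        (v 3 : ZFSet) (v 4 : ZFSet) (v 5 : ZFSet) := by
  simp (config := { decide := true })
    [φ6, Pbody, Psing, Pdoub, Formula.Realize, Fin.snoc, Subtype.ext_iff]

end Formulas

section ZFOrd

lemma ordMem {x y : ZFSet} (hx : x.IsOrdinal) (hy : y ∈ x) : y.IsOrdinal := by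
  refine ⟨fun z hz w hw => hx.mem_trans' hw hz hy, fun {a b c} hab hbc hcy => ?_⟩
  exact hx.mem_trans' hab hbc (hx.isTransitive.mem_trans hcy hy)

lemma ordTri : ∀ x y : ZFSet, x.IsOrdinal → y.IsOrdinal → x ∈ y ∨ x = y ∨ y ∈ x := by
  intro x
  induction x using ZFSet.inductionOn with
  | _ x IHx =>
    intro y
    induction y using ZFSet.inductionOn with
    | _ y IHy =>
      intro hx hy
      by_cases hxy : x ∈ y
      · exact Or.inl hxy
      by_cases hyx : y ∈ x
      · exact Or.inr (Or.inr hyx)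
      refine Or.inr (Or.inl (ZFSet.ext fun t => ⟨fun ht => ?_, fun ht => ?_⟩))
      · rcases IHx t ht y (ordMem hx ht) hy with h | h | h
        · exact h
        · exact absurd (h ▸ ht) hyx
        · exact absurd (hx.isTransitive.mem_trans h ht) hyx
      · rcases IHy t ht hx (ordMem hy ht) with h | h | h
        · exact absurd (hy.isTransitive.mem_trans h ht) hxy
        · exact absurd (h ▸ ht) hxy
        · exact h

/-- A nonempty ordinal contains the empty set. -/
lemma ordEmptyMem {x : ZFSet} (hx : x.IsOrdinal) (hne : x ≠ ∅) : (∅ : ZFSet) ∈ x := by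
  have hne' : x.toSet.Nonempty := by
    rcases ZFSet.eq_empty_or_nonempty x with h | h
    · exact absurd h hne
    · obtain ⟨z, hz⟩ := h; exact ⟨z, hz⟩
  have hmin := ZFSet.mem_wf.min_mem x.toSet hne'
  have : ZFSet.mem_wf.min x.toSet hne' = ∅ := by
    rw [ZFSet.eq_empty]
    intro w hw
    exact ZFSet.mem_wf.not_lt_min x.toSet
      (hx.isTransitive.mem_trans hw hmin : _ ∈ x) hw
  rw [← this]; exact hmin

end ZFOrd

lemma mem_toSet' (x y : ZFSet) : y ∈ x.toSet ↔ y ∈ x := Iff.rfl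

section HSetLemmas

variable {θ : ZFSet}

lemma HSet_trans {x y : ZFSet} (hx : x ∈ HSet θ) (hy : y ∈ x) : y ∈ HSet θ :=
  ZFSet.Hereditarily.mem hx hy

lemma sing_mem_HSet (hθ : Cardinal.aleph0 < zCard θ) {a : ZFSet} (ha : a ∈ HSet θ) :
    ({a} : ZFSet) ∈ HSet θ := by
  refine ZFSet.hereditarily_iff.2 ⟨?_, fun y hy => ?_⟩
  · have h1 : zCard ({a} : ZFSet) = 1 := by
      rw [zCard, show ({a} : ZFSet).toSet = {a} from ZFSet.coe_singleton a, Cardinal.mk_singleton]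
    rw [h1]
    exact lt_trans Cardinal.one_lt_aleph0 hθ
  · rw [ZFSet.mem_singleton] at hy
    subst hy; exact ha

lemma doub_mem_HSet (hθ : Cardinal.aleph0 < zCard θ) {a b : ZFSet}
    (ha : a ∈ HSet θ) (hb : b ∈ HSet θ) : ({a, b} : ZFSet) ∈ HSet θ := by
  refine ZFSet.hereditarily_iff.2 ⟨?_, fun y hy => ?_⟩
  · have h1 : zCard ({a, b} : ZFSet) ≤ 2 := by
      rw [zCard]
      have : ({a, b} : ZFSet).toSet = insert a ({b} : Set ZFSet) := by
        rw [show ({a, b} : ZFSet).toSet = insert a ({b} : ZFSet).toSet from ZFSet.coe_insert a {b},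
          show ({b} : ZFSet).toSet = {b} from ZFSet.coe_singleton b]
      rw [this]
      refine le_trans Cardinal.mk_insert_le ?_
      rw [Cardinal.mk_singleton]
      norm_num
    refine lt_of_le_of_lt h1 (lt_trans ?_ hθ)
    exact Cardinal.lt_aleph0.2 ⟨2, by norm_num⟩
  · rw [ZFSet.mem_pair] at hy
    rcases hy with rfl | rfl
    · exact ha
    · exact hb

end HSetLemmas

section Vec
variable {α : Type*} (a b c x y z : α)
@[simp] lemma vec1_0 : (![a] : Fin 1 → α) 0 = a := rfl
@[simp] lemma vec2_0 : (![a, b] : Fin 2 → α) 0 = a := rfl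
@[simp] lemma vec2_1 : (![a, b] : Fin 2 → α) 1 = b := rfl
@[simp] lemma vec3_0 : (![a, b, c] : Fin 3 → α) 0 = a := rfl
@[simp] lemma vec3_1 : (![a, b, c] : Fin 3 → α) 1 = b := rfl
@[simp] lemma vec3_2 : (![a, b, c] : Fin 3 → α) 2 = c := rfl
@[simp] lemma vec6_0 : (![a, b, c, x, y, z] : Fin 6 → α) 0 = a := rfl
@[simp] lemma vec6_1 : (![a, b, c, x, y, z] : Fin 6 → α) 1 = b := rfl
@[simp] lemma vec6_2 : (![a, b, c, x, y, z] : Fin 6 → α) 2 = c := rfl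
@[simp] lemma vec6_3 : (![a, b, c, x, y, z] : Fin 6 → α) 3 = x := rfl
@[simp] lemma vec6_4 : (![a, b, c, x, y, z] : Fin 6 → α) 4 = y := rfl
@[simp] lemma vec6_5 : (![a, b, c, x, y, z] : Fin 6 → α) 5 = z := rfl
end Vec

namespace SmallEmb

variable {θ : ZFSet} (e : SmallEmb θ)

lemma M_mem_HSet {x : ZFSet} (hx : x ∈ e.M) : x ∈ HSet θ :=
  ZFSet.Hereditarily.mem e.memH hx

lemma app_eq' {x : ZFSet} (hx : x ∈ e.M) : e.app x = ↑(e.j ⟨x, hx⟩) := dif_pos hx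

lemma app_mem_HSet {x : ZFSet} (hx : x ∈ e.M) : e.app x ∈ HSet θ := by
  rw [e.app_eq' hx]; exact (e.j ⟨x, hx⟩).2

lemma Tmem {x y : ZFSet} (hx : x ∈ e.M) (hy : y ∈ e.M) : x ∈ y ↔ e.app x ∈ e.app y := by
  have h := e.j.map_formula φmem ![⟨x, hx⟩, ⟨y, hy⟩]
  rw [realize_φmem, realize_φmem] at h
  simp only [Function.comp_apply, vec2_0, vec2_1] at h
  rw [← e.app_eq' hx, ← e.app_eq' hy] at h
  exact h.symm

lemma Tsub {x y : ZFSet} (hx : x ∈ e.M) (hy : y ∈ e.M) (hsub : x ⊆ y) :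
    e.app x ⊆ e.app y := by
  have h := e.j.map_formula φsub ![⟨x, hx⟩, ⟨y, hy⟩]
  rw [realize_φsub, realize_φsub] at h
  simp only [Function.comp_apply, vec2_0, vec2_1] at h
  rw [← e.app_eq' hx, ← e.app_eq' hy] at h
  intro a ha
  have haH : a ∈ HSet θ := HSet_trans (e.app_mem_HSet hx) ha
  exact h.2 (fun b _ hb => hsub hb) a haH ha

lemma Temp {x : ZFSet} (hx : x ∈ e.M) (h : ∀ a, a ∉ x) :
    ∀ a ∈ HSet θ, a ∉ e.app x := by
  have h2 := e.j.map_formula φemp ![⟨x, hx⟩]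
  rw [realize_φemp, realize_φemp] at h2
  simp only [Function.comp_apply, vec1_0] at h2
  rw [← e.app_eq' hx] at h2
  exact h2.2 (fun b _ => h b)

lemma Tord {x : ZFSet} (hx : x ∈ e.M) (hord : x.IsOrdinal) : (e.app x).IsOrdinal := by
  have h := e.j.map_formula φord ![⟨x, hx⟩]
  rw [realize_φord, realize_φord] at h
  simp only [Function.comp_apply, vec1_0] at h
  rw [← e.app_eq' hx] at h
  have hM : ∀ a ∈ e.M.toSet, ∀ b ∈ e.M.toSet, ∀ c ∈ e.M.toSet,
      (a ∈ x → b ∈ a → b ∈ x) ∧ (a ∈ x → b ∈ a → c ∈ b → c ∈ a) := by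
    intro a _ b _ c _
    exact ⟨fun h1 h2 => hord.isTransitive.mem_trans h2 h1,
      fun h1 h2 h3 => (ordMem hord h1).isTransitive.mem_trans h3 h2⟩
  have hH := h.2 hM
  have hXH : e.app x ∈ HSet θ := e.app_mem_HSet hx
  refine ⟨fun a ha b hb => ?_, fun {b c w} hbc hcw hwx => ?_⟩
  · have haH : a ∈ HSet θ := HSet_trans hXH ha
    have hbH : b ∈ HSet θ := HSet_trans haH hb
    exact (hH a haH b hbH b hbH).1 ha hb
  · have hwH : w ∈ HSet θ := HSet_trans hXH hwx
    have hcH : c ∈ HSet θ := HSet_trans hwH hcw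
    have hbH : b ∈ HSet θ := HSet_trans hcH hbc
    exact (hH w hwH c hcH b hbH).2 hwx hcw hbc

lemma Tu {x y : ZFSet} (hx : x ∈ e.M) (hy : y ∈ e.M)
    (h : ∃ a ∈ HSet θ, a ∈ e.app y ∧ (e.app x ∈ a ∨ e.app x = a)) :
    ∃ a ∈ e.M, a ∈ y ∧ (x ∈ a ∨ x = a) := by
  have h2 := e.j.map_formula φu ![⟨x, hx⟩, ⟨y, hy⟩]
  rw [realize_φu, realize_φu] at h2
  simp only [Function.comp_apply, vec2_0, vec2_1] at h2
  rw [← e.app_eq' hx, ← e.app_eq' hy] at h2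
  exact h2.1 h

lemma T3 {C₀ d₀ D : ZFSet} (hC₀ : C₀ ∈ e.M) (hd₀ : d₀ ∈ e.M) (hD : D ∈ e.M)
    (h : ∃ a ∈ HSet θ, ∃ x ∈ HSet θ, ∃ p ∈ HSet θ,
      Pbody (HSet θ) (e.app C₀) (e.app d₀) (e.app D) a x p) :
    ∃ a ∈ e.M, ∃ x ∈ e.M, ∃ p ∈ e.M, Pbody e.M.toSet C₀ d₀ D a x p := by
  have h2 := e.j.map_formula φ3 ![⟨C₀, hC₀⟩, ⟨d₀, hd₀⟩, ⟨D, hD⟩]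
  rw [realize_φ3, realize_φ3] at h2
  simp only [Function.comp_apply, vec3_0, vec3_1, vec3_2] at h2
  rw [← e.app_eq' hC₀, ← e.app_eq' hd₀, ← e.app_eq' hD] at h2
  exact h2.1 h

lemma T6 {C₀ d₀ D a x p : ZFSet} (hC₀ : C₀ ∈ e.M) (hd₀ : d₀ ∈ e.M) (hD : D ∈ e.M)
    (ha : a ∈ e.M) (hx : x ∈ e.M) (hp : p ∈ e.M)
    (h : Pbody e.M.toSet C₀ d₀ D a x p) :
    Pbody (HSet θ) (e.app C₀) (e.app d₀) (e.app D) (e.app a) (e.app x) (e.app p) := by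
  have h2 := e.j.map_formula φ6 ![⟨C₀, hC₀⟩, ⟨d₀, hd₀⟩, ⟨D, hD⟩, ⟨a, ha⟩, ⟨x, hx⟩, ⟨p, hp⟩]
  rw [realize_φ6, realize_φ6] at h2
  simp only [Function.comp_apply, vec6_0, vec6_1, vec6_2, vec6_3, vec6_4, vec6_5] at h2
  rw [← e.app_eq' hC₀, ← e.app_eq' hd₀, ← e.app_eq' hD,
    ← e.app_eq' ha, ← e.app_eq' hx, ← e.app_eq' hp] at h2
  exact h2.2 h

end SmallEmb

section Abs

lemma mem_pairK {w a b : ZFSet} : w ∈ ZFSet.pair a b ↔ w = {a} ∨ w = {a, b} := by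
  rw [ZFSet.pair]; exact ZFSet.mem_pair

lemma Psing_iff {S : Set ZFSet} (hS : ∀ {x y : ZFSet}, x ∈ S → y ∈ x → y ∈ S)
    {w a : ZFSet} (hw : w ∈ S) (ha : a ∈ S) : Psing S w a ↔ w = {a} := by
  constructor
  · intro h
    apply ZFSet.ext; intro u
    rw [ZFSet.mem_singleton]
    constructor
    · intro hu; exact (h u (hS hw hu)).1 hu
    · rintro rfl; exact (h u ha).2 rfl
  · rintro rfl u _
    exact ZFSet.mem_singleton

lemma Pdoub_iff {S : Set ZFSet} (hS : ∀ {x y : ZFSet}, x ∈ S → y ∈ x → y ∈ S)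
    {w a b : ZFSet} (hw : w ∈ S) (ha : a ∈ S) (hb : b ∈ S) :
    Pdoub S w a b ↔ w = {a, b} := by
  constructor
  · intro h
    apply ZFSet.ext; intro u
    rw [ZFSet.mem_pair]
    constructor
    · intro hu; exact (h u (hS hw hu)).1 hu
    · rintro (rfl | rfl)
      · exact (h u ha).2 (Or.inl rfl)
      · exact (h u hb).2 (Or.inr rfl)
  · rintro rfl u _
    exact ZFSet.mem_pair

lemma Pbody_out {S : Set ZFSet} (hS : ∀ {x y : ZFSet}, x ∈ S → y ∈ x → y ∈ S)
    {Cp dp Dp a x p : ZFSet} (ha : a ∈ S) (hx : x ∈ S) (hp : p ∈ S) (hDp : Dp ∈ S)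
    (hsa : ({a} : ZFSet) ∈ S) (hda : ({a, x} : ZFSet) ∈ S)
    (h : Pbody S Cp dp Dp a x p) :
    a ∈ Cp ∧ p ∈ dp ∧ p = ZFSet.pair a x ∧ x = Dp ∩ a := by
  obtain ⟨⟨⟨h1, h2⟩, h3⟩, h4⟩ := h
  refine ⟨h1, h2, ?_, ?_⟩
  · apply ZFSet.ext; intro w
    constructor
    · intro hw
      have hwS := hS hp hw
      rcases (h3 w hwS).1 hw with hsw | hdw
      · rw [(Psing_iff hS hwS ha).1 hsw]; exact mem_pairK.2 (Or.inl rfl)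
      · rw [(Pdoub_iff hS hwS ha hx).1 hdw]; exact mem_pairK.2 (Or.inr rfl)
    · intro hw
      rcases mem_pairK.1 hw with rfl | rfl
      · exact (h3 _ hsa).2 (Or.inl ((Psing_iff hS hsa ha).2 rfl))
      · exact (h3 _ hda).2 (Or.inr ((Pdoub_iff hS hda ha hx).2 rfl))
  · apply ZFSet.ext; intro w
    rw [ZFSet.mem_inter]
    constructor
    · intro hw; exact (h4 w (hS hx hw)).1 hw
    · rintro ⟨h5, h6⟩; exact (h4 w (hS hDp h5)).2 ⟨h5, h6⟩

end Abs

/-- a small embedding witnessing the ineffability of κ with respect to a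
κ-list, whose range also contains a given club C, witnesses the subtlety of κ with
respect to the list and C. -/
theorem stmt8 (κ θ d C : ZFSet) (e : SmallEmb θ)
    (hineff : zIneffable κ) (hd : IsList κ d) (hC : zClub C κ)
    (hj : IsSmallEmbFor e κ) (hran : d ∈ e.ran) (hM : fapp d e.crit ∈ e.M)
    (hCran : C ∈ e.ran) :
    ∃ α : ZFSet, α ∈ C ∧ α ∈ e.crit ∧ fapp d α = fapp d e.crit ∩ α := by
  obtain ⟨d₀, hd₀M, hd₀⟩ := hran
  obtain ⟨C₀, hC₀M, hC₀⟩ := hCran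
  have hcrMoved : e.crit ∈ e.movedSet :=
    ZFSet.mem_wf.min_mem e.movedSet e.movedSet_nonempty
  obtain ⟨hcrOrd, hcrM, hcrApp⟩ := hcrMoved
  have hcrκ : e.crit ∈ κ := by rw [← hj]; exact hcrApp
  have hκOrd : κ.IsOrdinal := hineff.1.1.1.1
  have hMH : ∀ {x : ZFSet}, x ∈ e.M → x ∈ HSet θ := fun hx => e.M_mem_HSet hx
  have hS : ∀ {x y : ZFSet}, x ∈ HSet θ → y ∈ x → y ∈ HSet θ :=
    fun hx hy => HSet_trans hx hy
  have hκH : κ ∈ HSet θ := by rw [← hj]; exact e.app_mem_HSet hcrM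
  have hκcard : zCard κ < zCard θ := ZFSet.Hereditarily.self hκH
  have hθℵ : Cardinal.aleph0 < zCard θ := lt_trans hineff.1.2 hκcard
  have hcrit_min : ∀ {x : ZFSet}, x ∈ e.movedSet → x ∉ e.crit :=
    fun hm => ZFSet.mem_wf.not_lt_min e.movedSet hm
  -- ordinals of M below the critical point are fixed
  have fix : ∀ β : ZFSet, β ∈ e.M → β ∈ e.crit → e.app β = β := by
    intro β
    induction β using ZFSet.inductionOn with
    | _ β IH =>
      intro hβM hβcr
      have hβOrd : β.IsOrdinal := ordMem hcrOrd hβcr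
      have happOrd := e.Tord hβM hβOrd
      have hsub : β ⊆ e.app β := by
        intro γ hγ
        have hγM : γ ∈ e.M := e.trans.mem_trans hγ hβM
        have hγcr : γ ∈ e.crit := hcrOrd.isTransitive.mem_trans hγ hβcr
        have h2 := (e.Tmem hγM hβM).1 hγ
        rwa [IH γ hγ hγM hγcr] at h2
      rcases ordTri (e.app β) β happOrd hβOrd with h | h | h
      · exact absurd (hsub h) (ZFSet.mem_irrefl _)
      · exact h
      · exact absurd hβcr (hcrit_min ⟨hβOrd, hβM, h⟩)
  -- C₀ is contained in the critical point
  have hC₀cr : ∀ {γ : ZFSet}, γ ∈ C₀ → γ ∈ e.crit := by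
    intro γ hγ
    have hγM := e.trans.mem_trans hγ hC₀M
    have h1 : e.app γ ∈ C := by rw [← hC₀]; exact (e.Tmem hγM hC₀M).1 hγ
    have h2 : e.app γ ∈ κ := hC.1 _ ((mem_toSet' _ _).2 h1)
    have h3 : e.app γ ∈ e.app e.crit := by rw [hj]; exact h2
    exact (e.Tmem hγM hcrM).2 h3
  -- the critical point is a nonzero ordinal
  have hcrne : e.crit ≠ ∅ := by
    intro h0
    have h1 := e.Temp hcrM (by rw [h0]; exact fun a => ZFSet.notMem_empty a)
    exact h1 e.crit (hMH hcrM) hcrApp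
  have hemptycr : (∅ : ZFSet) ∈ e.crit := ordEmptyMem hcrOrd hcrne
  -- the critical point belongs to C
  have hCH : C ∈ HSet θ := by rw [← hC₀]; exact e.app_mem_HSet hC₀M
  have hcrC : e.crit ∈ C := by
    refine (mem_toSet' _ _).1 (hC.2.2 e.crit hcrκ ⟨∅, hemptycr⟩ ?_)
    intro β hβ
    have hβM : β ∈ e.M := e.trans.mem_trans hβ hcrM
    have hβκ : β ∈ κ := hκOrd.isTransitive.mem_trans hβ hcrκ
    obtain ⟨γ, hγC, hor⟩ := hC.2.1 β hβκ
    have hγC' : γ ∈ C := (mem_toSet' _ _).1 hγC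
    have hfixβ : e.app β = β := fix β hβM hβ
    have hwit : ∃ a ∈ HSet θ, a ∈ e.app C₀ ∧ (e.app β ∈ a ∨ e.app β = a) := by
      refine ⟨γ, HSet_trans hCH hγC', ?_, ?_⟩
      · rw [hC₀]; exact hγC'
      · rw [hfixβ]; exact hor
    obtain ⟨γ', hγ'M, hγ'C₀, hor'⟩ := e.Tu hβM hC₀M hwit
    have hγ'cr : γ' ∈ e.crit := hC₀cr hγ'C₀
    have hγ'C : γ' ∈ C := by
      have := (e.Tmem hγ'M hC₀M).1 hγ'C₀
      rw [fix γ' hγ'M hγ'cr, hC₀] at this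
      exact this
    exact ⟨γ', (mem_toSet' _ _).2 hγ'C, hγ'cr, hor'⟩
  -- the list value at the critical point
  have hdH : d ∈ HSet θ := by rw [← hd₀]; exact e.app_mem_HSet hd₀M
  obtain ⟨w0, hw0, hw0u⟩ := hd.1.2 e.crit hcrκ
  have hexD : ∃ y, e.crit.pair y ∈ d := ⟨w0, hw0⟩
  have hpairD : ZFSet.pair e.crit (fapp d e.crit) ∈ d := by
    rw [fapp, dif_pos hexD]; exact hexD.choose_spec
  have hDM : fapp d e.crit ∈ e.M := hM
  have hDcr : fapp d e.crit ⊆ e.crit := hd.2 e.crit hcrκ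
  have hDfix : ∀ γ : ZFSet,
      γ ∈ fapp d e.crit ↔ (γ ∈ e.app (fapp d e.crit) ∧ γ ∈ e.crit) := by
    intro γ
    constructor
    · intro hγD
      have hγcr := hDcr hγD
      have hγM := e.trans.mem_trans hγD hDM
      refine ⟨?_, hγcr⟩
      have h2 := (e.Tmem hγM hDM).1 hγD
      rwa [fix γ hγM hγcr] at h2
    · rintro ⟨h1, h2⟩
      have hγM := e.trans.mem_trans h2 hcrM
      exact (e.Tmem hγM hDM).2 (by rwa [fix γ hγM h2])
  -- the H(θ)-side Σ-fact
  have hcrH : e.crit ∈ HSet θ := hMH hcrM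
  have hDH : fapp d e.crit ∈ HSet θ := hMH hDM
  have hpH : ZFSet.pair e.crit (fapp d e.crit) ∈ HSet θ := HSet_trans hdH hpairD
  have hPH : Pbody (HSet θ) C d (e.app (fapp d e.crit)) e.crit (fapp d e.crit)
      (ZFSet.pair e.crit (fapp d e.crit)) := by
    refine ⟨⟨⟨hcrC, hpairD⟩, ?_⟩, fun w _ => hDfix w⟩
    intro w hwH
    constructor
    · intro hwp
      rcases mem_pairK.1 hwp with rfl | rfl
      · exact Or.inl ((Psing_iff hS hwH hcrH).2 rfl)
      · exact Or.inr ((Pdoub_iff hS hwH hcrH hDH).2 rfl)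
    · intro hor
      rcases hor with hs | hdub
      · rw [(Psing_iff hS hwH hcrH).1 hs]; exact mem_pairK.2 (Or.inl rfl)
      · rw [(Pdoub_iff hS hwH hcrH hDH).1 hdub]; exact mem_pairK.2 (Or.inr rfl)
  -- pull it down to M, then push the witnesses back up
  have hup := e.T3 hC₀M hd₀M hDM
    ⟨e.crit, hcrH, fapp d e.crit, hDH, ZFSet.pair e.crit (fapp d e.crit), hpH,
      by rw [hC₀, hd₀]; exact hPH⟩
  obtain ⟨a, haM, x, hxM, p, hpM, hPM⟩ := hup
  have hPH2 := e.T6 hC₀M hd₀M hDM haM hxM hpM hPM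
  rw [hC₀, hd₀] at hPH2
  have haC₀ : a ∈ C₀ := hPM.1.1.1
  have hacr : a ∈ e.crit := hC₀cr haC₀
  have hafix : e.app a = a := fix a haM hacr
  rw [hafix] at hPH2
  -- extract the concrete facts in H(θ)
  have haH : a ∈ HSet θ := hMH haM
  have hxH : e.app x ∈ HSet θ := e.app_mem_HSet hxM
  have hpHH : e.app p ∈ HSet θ := e.app_mem_HSet hpM
  have hDH2 : e.app (fapp d e.crit) ∈ HSet θ := e.app_mem_HSet hDM
  obtain ⟨haC, hpd, hpeq, hxeq⟩ := Pbody_out hS haH hxH hpHH hDH2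
    (sing_mem_HSet hθℵ haH) (doub_mem_HSet hθℵ haH hxH) hPH2
  -- conclude
  have haκ : a ∈ κ := hκOrd.isTransitive.mem_trans hacr hcrκ
  have hpair2 : ZFSet.pair a (e.app x) ∈ d := by rw [← hpeq]; exact hpd
  obtain ⟨w1, hw1, hw1u⟩ := hd.1.2 a haκ
  have hex2 : ∃ y, a.pair y ∈ d := ⟨e.app x, hpair2⟩
  have hfap : fapp d a = e.app x := by
    rw [fapp, dif_pos hex2]
    exact (hw1u _ hex2.choose_spec).trans (hw1u _ hpair2).symm
  have hxD : e.app x = fapp d e.crit ∩ a := by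
    rw [hxeq]
    apply ZFSet.ext; intro w
    rw [ZFSet.mem_inter, ZFSet.mem_inter]
    constructor
    · rintro ⟨h1, h2⟩
      exact ⟨(hDfix w).2 ⟨h1, hcrOrd.isTransitive.mem_trans h2 hacr⟩, h2⟩
    · rintro ⟨h1, h2⟩
      exact ⟨((hDfix w).1 h1).1, h2⟩
  exact ⟨a, haC, hacr, by rw [hfap, hxD]⟩
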